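/- Let C be a z_0-unsolvable configuration on the Flower snark J_3, and let A = {x_0, x_1, x_{−1}}, B = {y_0, y_1, y_{−1}}, E = {v_0, v_1, v_{−1}}. Then C(A) ≤ 4, C(B) ≤ 4, and C(E) ≤ 4, where C(S) denotes the total number of pebbles on the vertices of S. -/

import Mathlib

/-- A pebbling move on the graph `G`: remove two pebbles from a vertex `u`
(which has at least two pebbles) and add one pebble to a neighbor `v` of `u`. -/
def PebblingMove {V : Type} [DecidableEq V] (G : SimpleGraph V) (C C' : V → ℕ) : Prop :=
  ∃ u v, G.Adj u v ∧ 2 ≤ C u ∧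
    C' = fun w => if w = u then C u - 2 else if w = v then C v + 1 else C w

/-- A configuration `C` is `r`-solvable if some (possibly empty) sequence of
pebbling moves starting from `C` produces a configuration with at least one
pebble on `r`. -/
def PebblingSolvable {V : Type} [DecidableEq V] (G : SimpleGraph V) (C : V → ℕ) (r : V) : Prop :=
  ∃ C' : V → ℕ, Relation.ReflTransGen (PebblingMove G) C C' ∧ 1 ≤ C' r

/-- The pebbling number of `G`: the least `t` such that for every target
vertex `r`, every configuration of size `t` is `r`-solvable. -/
noncomputable def pebblingNumber {V : Type} [DecidableEq V] [Fintype V] (G : SimpleGraph V) : ℕ :=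
  sInf {t : ℕ | ∀ (r : V) (C : V → ℕ), (∑ v, C v) = t → PebblingSolvable G C r}

/-- The 12 vertices of the Flower snark `J₃`; `vm` denotes `v_{-1}`,
`xm` denotes `x_{-1}`, etc. -/
inductive J3V : Type
  | v0 | v1 | vm | x0 | x1 | xm | y0 | y1 | ym | z0 | z1 | zm
  deriving DecidableEq

instance : Fintype J3V where
  elems := {J3V.v0, J3V.v1, J3V.vm, J3V.x0, J3V.x1, J3V.xm,
    J3V.y0, J3V.y1, J3V.ym, J3V.z0, J3V.z1, J3V.zm}
  complete := by
    intro x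
    cases x <;> simp

open J3V in
/-- The Flower snark `J₃` (Tietze's graph), with its 18 edges. -/
def J3 : SimpleGraph J3V := SimpleGraph.fromEdgeSet
  ({s(z0, v0), s(z0, x0), s(z0, y0), s(v0, v1), s(v0, vm),
    s(x0, x1), s(x0, xm), s(y0, y1), s(y0, ym), s(v1, vm),
    s(v1, z1), s(vm, zm), s(x1, z1), s(y1, z1), s(xm, zm),
    s(ym, zm), s(xm, y1), s(x1, ym)} : Set (Sym2 J3V))


lemma pebbling_step {V : Type} [DecidableEq V] {G : SimpleGraph V} {C : V → ℕ} {r u v : V}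
    (hadj : G.Adj u v) (h2 : 2 ≤ C u)
    (hs : PebblingSolvable G (fun w => if w = u then C u - 2 else if w = v then C v + 1 else C w) r) :
    PebblingSolvable G C r := by
  obtain ⟨C', hC', h1⟩ := hs
  exact ⟨C', Relation.ReflTransGen.head ⟨u, v, hadj, h2, rfl⟩ hC', h1⟩

lemma pebbling_done {V : Type} [DecidableEq V] {G : SimpleGraph V} {C : V → ℕ} {r : V}
    (h1 : 1 ≤ C r) : PebblingSolvable G C r :=
  ⟨C, Relation.ReflTransGen.refl, h1⟩

lemma pebbling_aux {V : Type} [DecidableEq V] {G : SimpleGraph V} {C : V → ℕ} {r a b c : V}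
    (hab : a ≠ b) (hac : a ≠ c) (hbc : b ≠ c) (hrb : r ≠ b) (hrc : r ≠ c)
    (har : G.Adj a r) (hba : G.Adj b a) (hca : G.Adj c a)
    (h5 : 5 ≤ C a + C b + C c) : PebblingSolvable G C r := by
  have hra : r ≠ a := har.ne'
  by_cases ha : 2 ≤ C a
  · exact pebbling_step har ha (pebbling_done (by simp [hra]))
  · by_cases hb4 : 4 ≤ C b
    · refine pebbling_step hba (by omega) ?_
      refine pebbling_step (u := b) (v := a) (by simpa using hba)
        (by simp [hab, hac, hbc, hrb, hrc, hra, Ne.symm hab, Ne.symm hac, Ne.symm hbc, Ne.symm hrb, Ne.symm hrc, Ne.symm hra] <;> omega) ?_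
      refine pebbling_step (u := a) (v := r) (by simpa using har)
        (by simp [hab, hac, hbc, hrb, hrc, hra, Ne.symm hab, Ne.symm hac, Ne.symm hbc, Ne.symm hrb, Ne.symm hrc, Ne.symm hra] <;> omega) ?_
      exact pebbling_done (by simp [hab, hac, hbc, hrb, hrc, hra, Ne.symm hab, Ne.symm hac, Ne.symm hbc, Ne.symm hrb, Ne.symm hrc, Ne.symm hra] <;> omega)
    · by_cases hc4 : 4 ≤ C c
      · refine pebbling_step hca (by omega) ?_
        refine pebbling_step (u := c) (v := a) (by simpa using hca)
          (by simp [hab, hac, hbc, hrb, hrc, hra, Ne.symm hab, Ne.symm hac, Ne.symm hbc, Ne.symm hrb, Ne.symm hrc, Ne.symm hra] <;> omega) ?_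
        refine pebbling_step (u := a) (v := r) (by simpa using har)
          (by simp [hab, hac, hbc, hrb, hrc, hra, Ne.symm hab, Ne.symm hac, Ne.symm hbc, Ne.symm hrb, Ne.symm hrc, Ne.symm hra] <;> omega) ?_
        exact pebbling_done (by simp [hab, hac, hbc, hrb, hrc, hra, Ne.symm hab, Ne.symm hac, Ne.symm hbc, Ne.symm hrb, Ne.symm hrc, Ne.symm hra] <;> omega)
      · by_cases hb2 : 2 ≤ C b
        · by_cases hc2 : 2 ≤ C c
          · refine pebbling_step hba hb2 ?_
            refine pebbling_step (u := c) (v := a) (by simpa using hca)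
              (by simp [hab, hac, hbc, hrb, hrc, hra, Ne.symm hab, Ne.symm hac, Ne.symm hbc, Ne.symm hrb, Ne.symm hrc, Ne.symm hra] <;> omega) ?_
            refine pebbling_step (u := a) (v := r) (by simpa using har)
              (by simp [hab, hac, hbc, hrb, hrc, hra, Ne.symm hab, Ne.symm hac, Ne.symm hbc, Ne.symm hrb, Ne.symm hrc, Ne.symm hra] <;> omega) ?_
            exact pebbling_done (by simp [hab, hac, hbc, hrb, hrc, hra, Ne.symm hab, Ne.symm hac, Ne.symm hbc, Ne.symm hrb, Ne.symm hrc, Ne.symm hra] <;> omega)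
          · refine pebbling_step hba hb2 ?_
            refine pebbling_step (u := a) (v := r) (by simpa using har)
              (by simp [hab, hac, hbc, hrb, hrc, hra, Ne.symm hab, Ne.symm hac, Ne.symm hbc, Ne.symm hrb, Ne.symm hrc, Ne.symm hra] <;> omega) ?_
            exact pebbling_done (by simp [hab, hac, hbc, hrb, hrc, hra, Ne.symm hab, Ne.symm hac, Ne.symm hbc, Ne.symm hrb, Ne.symm hrc, Ne.symm hra] <;> omega)
        · have hc2 : 2 ≤ C c := by omega
          refine pebbling_step hca hc2 ?_
          refine pebbling_step (u := a) (v := r) (by simpa using har)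
            (by simp [hab, hac, hbc, hrb, hrc, hra, Ne.symm hab, Ne.symm hac, Ne.symm hbc, Ne.symm hrb, Ne.symm hrc, Ne.symm hra] <;> omega) ?_
          exact pebbling_done (by simp [hab, hac, hbc, hrb, hrc, hra, Ne.symm hab, Ne.symm hac, Ne.symm hbc, Ne.symm hrb, Ne.symm hrc, Ne.symm hra] <;> omega)

open J3V in
lemma J3_adj : J3.Adj x0 z0 ∧ J3.Adj x1 x0 ∧ J3.Adj xm x0 ∧
    J3.Adj y0 z0 ∧ J3.Adj y1 y0 ∧ J3.Adj ym y0 ∧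
    J3.Adj v0 z0 ∧ J3.Adj v1 v0 ∧ J3.Adj vm v0 := by
  exact ⟨by simp [J3], by simp [J3], by simp [J3], by simp [J3], by simp [J3], by simp [J3], by simp [J3], by simp [J3], by simp [J3]⟩

/-- For a `z₀`-unsolvable configuration `C` on `J₃`, each of the sets
`A = {x₀, x₁, x₋₁}`, `B = {y₀, y₁, y₋₁}`, `E = {v₀, v₁, v₋₁}` carries at
most 4 pebbles. -/
theorem J3_z0_unsolvable_bounds (C : J3V → ℕ)
    (h : ¬ PebblingSolvable J3 C J3V.z0) :
    (∑ v ∈ ({J3V.x0, J3V.x1, J3V.xm} : Finset J3V), C v) ≤ 4 ∧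
    (∑ v ∈ ({J3V.y0, J3V.y1, J3V.ym} : Finset J3V), C v) ≤ 4 ∧
    (∑ v ∈ ({J3V.v0, J3V.v1, J3V.vm} : Finset J3V), C v) ≤ 4 := by
  obtain ⟨a1, a2, a3, b1, b2, b3, c1, c2, c3⟩ := J3_adj
  have eA : (∑ v ∈ ({J3V.x0, J3V.x1, J3V.xm} : Finset J3V), C v) = C J3V.x0 + (C J3V.x1 + C J3V.xm) := by
    rw [Finset.sum_insert (by decide), Finset.sum_insert (by decide), Finset.sum_singleton]
  have eB : (∑ v ∈ ({J3V.y0, J3V.y1, J3V.ym} : Finset J3V), C v) = C J3V.y0 + (C J3V.y1 + C J3V.ym) := by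
    rw [Finset.sum_insert (by decide), Finset.sum_insert (by decide), Finset.sum_singleton]
  have eE : (∑ v ∈ ({J3V.v0, J3V.v1, J3V.vm} : Finset J3V), C v) = C J3V.v0 + (C J3V.v1 + C J3V.vm) := by
    rw [Finset.sum_insert (by decide), Finset.sum_insert (by decide), Finset.sum_singleton]
  rw [eA, eB, eE]
  by_contra hcon
  push_neg at hcon
  apply h
  rcases Nat.lt_or_ge (C J3V.x0 + (C J3V.x1 + C J3V.xm)) 5 with hA | hA
  · rcases Nat.lt_or_ge (C J3V.y0 + (C J3V.y1 + C J3V.ym)) 5 with hB | hB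
    · have hE := hcon (by omega) (by omega)
      exact pebbling_aux (by decide) (by decide) (by decide) (by decide) (by decide) c1 c2 c3 (by omega)
    · exact pebbling_aux (by decide) (by decide) (by decide) (by decide) (by decide) b1 b2 b3 (by omega)
  · exact pebbling_aux (by decide) (by decide) (by decide) (by decide) (by decide) a1 a2 a3 (by omega)
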